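/- In A(T), for any tuple ā, if n is greatest such that some a_i ∈ G_n, then the Scott rank of ā equals the Scott rank of the single element id_n. -/

import Mathlib

open scoped symmDiff

/-- `RankGE succ o x` means the tree rank of `x` (w.r.t. successor relation `succ`)
is at least `o`; unranked nodes (`rk = ∞`) satisfy this for every ordinal. -/
def RankGE {α : Type*} (succ : α → α → Prop) (o : Ordinal) (x : α) : Prop :=
  ∀ β < o, ∃ y, succ x y ∧ RankGE succ β y
termination_by o

/-- `T` is a subtree of `ω^{<ω}`: closed under initial segments. -/
def IsTree (T : Set (List ℕ)) : Prop := ∀ s t : List ℕ, s <+: t → t ∈ T → s ∈ T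

/-- `τ` is an immediate successor of `σ` in `T`. -/
def TSucc (T : Set (List ℕ)) (σ τ : List ℕ) : Prop := τ ∈ T ∧ ∃ k : ℕ, τ = σ ++ [k]

instance : Std.Commutative (α := Finset (List ℕ)) (· ∆ ·) := ⟨fun a b => symmDiff_comm a b⟩
instance : Std.Associative (α := Finset (List ℕ)) (· ∆ ·) := ⟨fun a b c => symmDiff_assoc a b c⟩

/-- The predecessor map: the symmetric-difference sum of the singletons of the
`T`-predecessors of the members of `a`. -/
def pmap (a : Finset (List ℕ)) : Finset (List ℕ) :=
  Finset.fold (· ∆ ·) ∅ (fun t => {t.dropLast}) a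

/-- The carrier `G = ⋃ₙ Gₙ`: an element of `Gₙ` is a pair `(n, a)` with `a` a finite
subset of the level-`n` nodes of `T`; `(n, ∅)` is the identity `idₙ` of `Gₙ`. -/
def Gset (T : Set (List ℕ)) : Set (ℕ × Finset (List ℕ)) :=
  {x | ∀ t ∈ x.2, t ∈ T ∧ t.length = x.1}

/-- The operations `f_a`: `fA a b = a* ∆ b*` where `a*`, `b*` are the iterated
predecessors of `a`, `b` down to the minimum of their levels. -/
def fA (x y : ℕ × Finset (List ℕ)) : ℕ × Finset (List ℕ) :=
  (min x.1 y.1, (pmap^[x.1 - min x.1 y.1] x.2) ∆ (pmap^[y.1 - min x.1 y.1] y.2))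

/-- An automorphism of the structure `A(T) = (G, (f_a)_{a ∈ G})`: a bijection of `G`
commuting with each of the named unary operations `f_a`. -/
def IsAuto (T : Set (List ℕ)) (g : ℕ × Finset (List ℕ) → ℕ × Finset (List ℕ)) : Prop :=
  Set.BijOn g (Gset T) (Gset T) ∧ ∀ a ∈ Gset T, ∀ b ∈ Gset T, g (fA a b) = fA a (g b)

abbrev GP := ℕ × Finset (List ℕ)

/-- Terms of the language of `A(T)`: variables and applications of the unary symbols `f_a`. -/
inductive ATerm : Type where
  | var : ℕ → ATerm
  | app : GP → ATerm → ATerm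

def ATerm.eval (ρ : ℕ → GP) : ATerm → GP
  | .var i => ρ i
  | .app a t => fA a (ATerm.eval ρ t)

/-- A term is `ok` if its variables are among `x₀, …, x_{k-1}` and its symbols come from `G`. -/
def ATerm.ok (T : Set (List ℕ)) (k : ℕ) : ATerm → Prop
  | .var i => i < k
  | .app a t => a ∈ Gset T ∧ ATerm.ok T k t

def env {k : ℕ} (a : Fin k → GP) : ℕ → GP := fun i => if h : i < k then a ⟨i, h⟩ else (0, ∅)

/-- `≡⁰`: the tuples satisfy the same quantifier-free formulas. -/
def eqQF (T : Set (List ℕ)) (k : ℕ) (a b : Fin k → GP) : Prop :=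
  ∀ t₁ t₂ : ATerm, ATerm.ok T k t₁ → ATerm.ok T k t₂ →
    (ATerm.eval (env a) t₁ = ATerm.eval (env a) t₂ ↔ ATerm.eval (env b) t₁ = ATerm.eval (env b) t₂)

/-- The standard back-and-forth equivalences `≡^β` on tuples of `A(T)`. -/
def BF (T : Set (List ℕ)) (β : Ordinal) (k : ℕ) (a b : Fin k → GP) : Prop :=
  if β = 0 then eqQF T k a b
  else ∀ γ < β,
    (∀ c ∈ Gset T, ∃ d ∈ Gset T, BF T γ (k + 1) (Fin.snoc a c) (Fin.snoc b d)) ∧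
    (∀ d ∈ Gset T, ∃ c ∈ Gset T, BF T γ (k + 1) (Fin.snoc a c) (Fin.snoc b d))
termination_by β

/-- `b̄` lies in the automorphism orbit of `ā`. -/
def InOrbit (T : Set (List ℕ)) {k : ℕ} (a b : Fin k → GP) : Prop :=
  ∃ g, IsAuto T g ∧ ∀ i, g (a i) = b i

/-- Scott rank of a tuple: the least `β` such that `≡^β`-equivalence to the tuple
implies membership in its orbit. -/
noncomputable def SR (T : Set (List ℕ)) {k : ℕ} (a : Fin k → GP) : Ordinal :=
  sInf {β : Ordinal | ∀ b : Fin k → GP, (∀ i, b i ∈ Gset T) → BF T β k a b → InOrbit T a b}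


/-! ### Auxiliary development -/

section Aux

open Finset

local notation "π" => pmap

lemma sd_empty (a : Finset (List ℕ)) : a ∆ ∅ = a := by simp
lemma empty_sd (a : Finset (List ℕ)) : ∅ ∆ a = a := by simp
lemma sd_cancel_right (a b : Finset (List ℕ)) : a ∆ b ∆ b = a := symmDiff_symmDiff_cancel_right b a
lemma sd_cancel_left (a b : Finset (List ℕ)) : a ∆ (a ∆ b) = b := symmDiff_symmDiff_cancel_left a b
lemma sd_self (a : Finset (List ℕ)) : a ∆ a = ∅ := by simp
lemma sd_right_inj {a b c : Finset (List ℕ)} (h : a ∆ c = b ∆ c) : a = b := by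
  have := congrArg (· ∆ c) h
  simpa [sd_cancel_right] using this

lemma pmap_empty : pmap ∅ = ∅ := rfl

lemma pmap_symmDiff (s t : Finset (List ℕ)) :
    pmap (s ∆ t) = pmap s ∆ pmap t := by
  have h1 := Finset.fold_union_inter (op := (· ∆ ·))
    (hc := ⟨fun a b => symmDiff_comm a b⟩) (ha := ⟨fun a b c => symmDiff_assoc a b c⟩)
    (f := fun t : List ℕ => ({t.dropLast} : Finset (List ℕ)))
    (s₁ := s) (s₂ := t) (b₁ := (∅ : Finset (List ℕ))) (b₂ := (∅ : Finset (List ℕ)))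
  have h2 := Finset.fold_union_inter (op := (· ∆ ·))
    (hc := ⟨fun a b => symmDiff_comm a b⟩) (ha := ⟨fun a b c => symmDiff_assoc a b c⟩)
    (f := fun t : List ℕ => ({t.dropLast} : Finset (List ℕ)))
    (s₁ := s ∆ t) (s₂ := s ∩ t) (b₁ := (∅ : Finset (List ℕ))) (b₂ := (∅ : Finset (List ℕ)))
  have e1 : (s ∆ t) ∪ (s ∩ t) = s ∪ t := by
    ext x; simp [Finset.mem_symmDiff]; tauto
  have e2 : (s ∆ t) ∩ (s ∩ t) = ∅ := by
    ext x; simp [Finset.mem_symmDiff]; tauto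
  rw [e1, e2] at h2
  simp only [Finset.fold_empty, sd_empty] at h2
  calc pmap (s ∆ t) = pmap (s ∆ t) ∆ pmap (s ∩ t) ∆ pmap (s ∩ t) := (sd_cancel_right _ _).symm
    _ = pmap (s ∪ t) ∆ pmap (s ∩ t) := by unfold pmap; rw [← h2]
    _ = pmap s ∆ pmap t := h1

lemma pmap_insert {x : List ℕ} {s : Finset (List ℕ)} (hx : x ∉ s) :
    pmap (insert x s) = {x.dropLast} ∆ pmap s := Finset.fold_insert hx

lemma pmap_subset (c : Finset (List ℕ)) : pmap c ⊆ c.image List.dropLast := by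
  classical
  induction c using Finset.induction_on with
  | empty => simp [pmap]
  | @insert x s hx ih =>
    rw [pmap_insert hx]
    intro u hu
    rw [Finset.mem_symmDiff] at hu
    simp only [Finset.image_insert, Finset.mem_insert]
    rcases hu with ⟨h, _⟩ | ⟨h, _⟩
    · left; exact (Finset.mem_singleton.mp h)
    · right; exact ih h

lemma pmap_iter_symmDiff (j : ℕ) (s t : Finset (List ℕ)) :
    pmap^[j] (s ∆ t) = pmap^[j] s ∆ pmap^[j] t := by
  induction j generalizing s t with
  | zero => rfl
  | succ j ih => simp only [Function.iterate_succ_apply, pmap_symmDiff, ih]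

lemma pmap_iter_empty (j : ℕ) : pmap^[j] (∅ : Finset (List ℕ)) = ∅ := by
  induction j with
  | zero => rfl
  | succ j ih => simp only [Function.iterate_succ_apply, pmap_empty, ih]

/-- Finsets of level-`n` nodes of `T`. -/
def Vset (T : Set (List ℕ)) (n : ℕ) : Set (Finset (List ℕ)) :=
  {c | ∀ t ∈ c, t ∈ T ∧ t.length = n}

lemma Vset_empty (T : Set (List ℕ)) (n : ℕ) : (∅ : Finset (List ℕ)) ∈ Vset T n := by
  intro t ht; simp at ht

lemma Vset_symmDiff {T : Set (List ℕ)} {n : ℕ} {s t : Finset (List ℕ)}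
    (hs : s ∈ Vset T n) (ht : t ∈ Vset T n) : s ∆ t ∈ Vset T n := by
  intro u hu
  rw [Finset.mem_symmDiff] at hu
  rcases hu with ⟨h, _⟩ | ⟨h, _⟩
  · exact hs u h
  · exact ht u h

lemma Vset_pmap {T : Set (List ℕ)} (hT : IsTree T) {n : ℕ} {c : Finset (List ℕ)}
    (hc : c ∈ Vset T (n + 1)) : pmap c ∈ Vset T n := by
  intro u hu
  rcases Finset.mem_image.mp (pmap_subset c hu) with ⟨t, ht, rfl⟩
  obtain ⟨htT, hlen⟩ := hc t ht
  refine ⟨hT _ t (List.dropLast_prefix t) htT, ?_⟩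
  simp [List.length_dropLast, hlen]

lemma Vset_pmap_iter {T : Set (List ℕ)} (hT : IsTree T) {n j : ℕ} {c : Finset (List ℕ)}
    (hc : c ∈ Vset T (n + j)) : pmap^[j] c ∈ Vset T n := by
  induction j generalizing c with
  | zero => exact hc
  | succ j ih =>
    rw [Function.iterate_succ_apply]
    exact ih (Vset_pmap hT (by rwa [Nat.add_succ] at hc))

lemma pmap_iter_add (i j : ℕ) (c : Finset (List ℕ)) :
    pmap^[i + j] c = pmap^[i] (pmap^[j] c) := Function.iterate_add_apply pmap i j c

lemma mem_Gset_iff {T : Set (List ℕ)} {x : GP} : x ∈ Gset T ↔ x.2 ∈ Vset T x.1 := Iff.rfl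

lemma id_mem_Gset (T : Set (List ℕ)) (m : ℕ) : ((m, ∅) : GP) ∈ Gset T := by
  intro t ht; simp at ht

lemma fA_eq (x y : GP) :
    fA x y = (min x.1 y.1, (pmap^[x.1 - min x.1 y.1] x.2) ∆ (pmap^[y.1 - min x.1 y.1] y.2)) := rfl

lemma fA_id_left {m : ℕ} {x : GP} (h : x.1 ≤ m) : fA (m, ∅) x = x := by
  have hmin : min m x.1 = x.1 := min_eq_right h
  rw [fA_eq]
  simp only [hmin, pmap_iter_empty, empty_sd, Nat.sub_self]
  simp

lemma fA_id_left_eq_iff {m : ℕ} {x : GP} : fA (m, ∅) x = x ↔ x.1 ≤ m := by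
  constructor
  · intro h
    by_contra hlt
    push_neg at hlt
    have : (fA (m, ∅) x).1 = min m x.1 := rfl
    rw [h] at this
    have h2 := min_le_left m x.1
    omega
  · exact fA_id_left

end Aux

section Aux2

lemma fA_le {x y : GP} (h : x.1 ≤ y.1) :
    fA x y = (x.1, x.2 ∆ pmap^[y.1 - x.1] y.2) := by
  have hmin : min x.1 y.1 = x.1 := min_eq_left h
  rw [fA_eq, hmin, Nat.sub_self]
  rfl

/-- `Ebf β n c`: the level-`n` vector `c` is `β`-extendible upwards through the tree. -/
def Ebf (T : Set (List ℕ)) (β : Ordinal) (n : ℕ) (c : Finset (List ℕ)) : Prop :=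
  ∀ γ < β, ∀ m, n < m → ∃ c', c' ∈ Vset T m ∧ pmap^[m - n] c' = c ∧ Ebf T γ m c'
termination_by β

lemma Ebf_mono {T : Set (List ℕ)} {β γ : Ordinal} {n : ℕ} {c : Finset (List ℕ)}
    (h : Ebf T β n c) (hγ : γ ≤ β) : Ebf T γ n c := by
  rw [Ebf] at h ⊢
  intro δ hδ
  exact h δ (lt_of_lt_of_le hδ hγ)

lemma Ebf_zero (T : Set (List ℕ)) (n : ℕ) (c : Finset (List ℕ)) : Ebf T 0 n c := by
  rw [Ebf]
  intro γ hγ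
  exact absurd hγ (by simp)

/-- `Einf n c`: `c` is the level-`n` member of a fully coherent sequence. -/
def Einf (T : Set (List ℕ)) (n : ℕ) (c : Finset (List ℕ)) : Prop :=
  ∃ f : ℕ → Finset (List ℕ), f n = c ∧ ∀ m, f m ∈ Vset T m ∧ pmap (f (m + 1)) = f m

/-- `b̄` is the translate of `ā` by the level-`n` vector `c`. -/
def RelT (n : ℕ) {k : ℕ} (a b : Fin k → GP) (c : Finset (List ℕ)) : Prop :=
  ∀ j, b j = ((a j).1, (a j).2 ∆ pmap^[n - (a j).1] c)

lemma coh_iter {f : ℕ → Finset (List ℕ)} (hf : ∀ m, pmap (f (m + 1)) = f m) :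
    ∀ m j, pmap^[j] (f (m + j)) = f m := by
  intro m j
  induction j with
  | zero => rfl
  | succ j ih =>
    rw [Function.iterate_succ_apply, Nat.add_succ, hf (m + j), ih]

lemma coh_proj {f : ℕ → Finset (List ℕ)} (hf : ∀ m, pmap (f (m + 1)) = f m)
    {l m : ℕ} (h : l ≤ m) : pmap^[m - l] (f m) = f l := by
  have := coh_iter hf l (m - l)
  rwa [Nat.add_sub_cancel' h] at this

lemma env_eq {k : ℕ} (a : Fin k → GP) (j : Fin k) : env a j.1 = a j := by
  simp [env]

lemma env_snoc_lt {k : ℕ} (a : Fin k → GP) (e : GP) (i : ℕ) (h : i < k) :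
    env (Fin.snoc a e) i = env a i := by
  simp only [env, dif_pos h, dif_pos (Nat.lt_succ_of_lt h)]
  have : (⟨i, Nat.lt_succ_of_lt h⟩ : Fin (k + 1)) = Fin.castSucc ⟨i, h⟩ := rfl
  rw [this, Fin.snoc_castSucc]

lemma eval_snoc {T : Set (List ℕ)} {k : ℕ} (a : Fin k → GP) (e : GP) (t : ATerm)
    (ht : ATerm.ok T k t) :
    ATerm.eval (env (Fin.snoc a e)) t = ATerm.eval (env a) t := by
  induction t with
  | var i => exact env_snoc_lt a e i ht
  | app u t ih => simp only [ATerm.eval, ih ht.2]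

lemma ok_succ {T : Set (List ℕ)} {k : ℕ} {t : ATerm} (ht : ATerm.ok T k t) :
    ATerm.ok T (k + 1) t := by
  induction t with
  | var i => exact Nat.lt_succ_of_lt ht
  | app u t ih => exact ⟨ht.1, ih ht.2⟩

lemma eqQF_restrict {T : Set (List ℕ)} {k : ℕ} {a b : Fin k → GP} {e d : GP}
    (h : eqQF T (k + 1) (Fin.snoc a e) (Fin.snoc b d)) : eqQF T k a b := by
  intro t₁ t₂ h₁ h₂
  have := h t₁ t₂ (ok_succ h₁) (ok_succ h₂)
  rwa [eval_snoc a e t₁ h₁, eval_snoc a e t₂ h₂, eval_snoc b d t₁ h₁, eval_snoc b d t₂ h₂] at this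

/-- Key computation: evaluation of terms on a translated tuple. -/
lemma eval_diff {T : Set (List ℕ)} {k n : ℕ} {a b : Fin k → GP} {c : Finset (List ℕ)}
    (hmax : ∀ j, (a j).1 ≤ n) (hrel : RelT n a b c) :
    ∀ t : ATerm, ATerm.ok T k t →
      (ATerm.eval (env b) t).1 = (ATerm.eval (env a) t).1 ∧
      (ATerm.eval (env a) t).1 ≤ n ∧
      (ATerm.eval (env b) t).2
        = (ATerm.eval (env a) t).2 ∆ pmap^[n - (ATerm.eval (env a) t).1] c := by
  intro t ht
  induction t with
  | var i =>
    have hi : i < k := ht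
    simp only [ATerm.eval, env, dif_pos hi]
    obtain h := hrel ⟨i, hi⟩
    refine ⟨by rw [h], hmax _, by rw [h]⟩
  | app u t ih =>
    obtain ⟨h1, h2, h3⟩ := ih ht.2
    have hm : min u.1 (ATerm.eval (env a) t).1 ≤ (ATerm.eval (env a) t).1 := min_le_right _ _
    refine ⟨?_, ?_, ?_⟩
    · simp only [ATerm.eval, fA_eq, h1]
    · simp only [ATerm.eval, fA_eq]
      exact le_trans (min_le_right _ _) h2
    · simp only [ATerm.eval, fA_eq, h1, h3, pmap_iter_symmDiff, symmDiff_assoc]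
      congr 2
      rw [← pmap_iter_add]
      congr 1
      omega

/-- `RelT` implies `≡⁰`. -/
lemma eqQF_of_rel {T : Set (List ℕ)} {k n : ℕ} {a b : Fin k → GP} {c : Finset (List ℕ)}
    (hmax : ∀ j, (a j).1 ≤ n) (hrel : RelT n a b c) : eqQF T k a b := by
  intro t₁ t₂ h₁ h₂
  obtain ⟨l1, m1, e1⟩ := eval_diff (T := T) hmax hrel t₁ h₁
  obtain ⟨l2, m2, e2⟩ := eval_diff (T := T) hmax hrel t₂ h₂
  constructor
  · intro h
    rw [Prod.ext_iff] at h ⊢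
    refine ⟨by rw [l1, l2, h.1], ?_⟩
    rw [e1, e2, h.1, h.2]
  · intro h
    rw [Prod.ext_iff] at h ⊢
    have hl : (ATerm.eval (env a) t₁).1 = (ATerm.eval (env a) t₂).1 := by
      rw [← l1, ← l2]; exact h.1
    refine ⟨hl, ?_⟩
    have := h.2
    rw [e1, e2, hl] at this
    exact sd_right_inj this

end Aux2

section Aux3

/-- From `≡⁰`, levels agree. -/
lemma levels_of_eqQF {T : Set (List ℕ)} {k : ℕ} {a b : Fin k → GP}
    (h : eqQF T k a b) (j : Fin k) : (b j).1 = (a j).1 := by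
  have key : ∀ m : ℕ, ((a j).1 ≤ m ↔ (b j).1 ≤ m) := by
    intro m
    have := h (ATerm.app (m, ∅) (ATerm.var j.1)) (ATerm.var j.1)
      ⟨id_mem_Gset T m, j.isLt⟩ j.isLt
    simp only [ATerm.eval, env_eq] at this
    rw [fA_id_left_eq_iff, fA_id_left_eq_iff] at this
    exact this
  have h1 := (key (a j).1).mp le_rfl
  have h2 := (key (b j).1).mpr le_rfl
  omega

lemma rel_of_eqQF {T : Set (List ℕ)} (hT : IsTree T) {k n : ℕ} {a b : Fin k → GP}
    (haG : ∀ j, a j ∈ Gset T) (hbG : ∀ j, b j ∈ Gset T)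
    (i : Fin k) (hi : (a i).1 = n) (hmax : ∀ j, (a j).1 ≤ n)
    (h : eqQF T k a b) :
    ∃ c ∈ Vset T n, RelT n a b c := by
  have hlev := levels_of_eqQF h
  have hbiV : (b i).2 ∈ Vset T n := by
    have := hbG i
    rw [mem_Gset_iff, hlev i, hi] at this
    exact this
  have haiV : (a i).2 ∈ Vset T n := by
    have := haG i
    rw [mem_Gset_iff, hi] at this
    exact this
  refine ⟨(b i).2 ∆ (a i).2, Vset_symmDiff hbiV haiV, ?_⟩
  intro j
  set μ := (a j).1 with hμ
  have hμn : μ ≤ n := hmax j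
  have haiVμ : pmap^[n - μ] (a i).2 ∈ Vset T μ := by
    apply Vset_pmap_iter hT
    have e : μ + (n - μ) = n := by omega
    rw [e]
    exact haiV
  have hajV : (a j).2 ∈ Vset T μ := haG j
  set S : Finset (List ℕ) := pmap^[n - μ] (a i).2 ∆ (a j).2 with hS
  have hSG : ((μ, S) : GP) ∈ Gset T := by
    rw [mem_Gset_iff]
    exact Vset_symmDiff haiVμ hajV
  -- the two terms
  have key := h (ATerm.app (μ, S) (ATerm.var i.1)) (ATerm.app (μ, ∅) (ATerm.var j.1))
    ⟨hSG, i.isLt⟩ ⟨id_mem_Gset T μ, j.isLt⟩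
  have evA1 : ATerm.eval (env a) (ATerm.app (μ, S) (ATerm.var i.1)) = (μ, (a j).2) := by
    simp only [ATerm.eval, env_eq]
    rw [fA_le (by simpa [hi] using hμn : ((μ, S) : GP).1 ≤ (a i).1)]
    simp only [hi]
    rw [hS, symmDiff_comm (pmap^[n - μ] (a i).2) ((a j).2), symmDiff_assoc, sd_self, sd_empty]
  have evA2 : ATerm.eval (env a) (ATerm.app (μ, ∅) (ATerm.var j.1)) = (μ, (a j).2) := by
    simp only [ATerm.eval, env_eq]
    rw [fA_le (le_of_eq hμ : ((μ, ∅) : GP).1 ≤ (a j).1)]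
    simp only [hμ, Nat.sub_self, Function.iterate_zero_apply, empty_sd]
  have evB := key.mp (by rw [evA1, evA2])
  have evB1 : ATerm.eval (env b) (ATerm.app (μ, S) (ATerm.var i.1))
      = (μ, S ∆ pmap^[n - μ] (b i).2) := by
    simp only [ATerm.eval, env_eq]
    rw [fA_le (by rw [hlev i, hi]; exact hμn : ((μ, S) : GP).1 ≤ (b i).1)]
    simp only [hlev i, hi]
  have evB2 : ATerm.eval (env b) (ATerm.app (μ, ∅) (ATerm.var j.1))
      = (μ, (b j).2) := by
    simp only [ATerm.eval, env_eq]
    rw [fA_le (le_of_eq (by rw [hlev j, ← hμ]) : ((μ, ∅) : GP).1 ≤ (b j).1)]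
    have e : (b j).1 - μ = 0 := by rw [hlev j]; omega
    simp only [e, Function.iterate_zero_apply, empty_sd]
  rw [evB1, evB2] at evB
  have hbj2 : (b j).2 = S ∆ pmap^[n - μ] (b i).2 := by rw [← (Prod.ext_iff.mp evB).2]
  have : (b j).2 = (a j).2 ∆ pmap^[n - μ] ((b i).2 ∆ (a i).2) := by
    rw [hbj2, hS, pmap_iter_symmDiff]
    ac_rfl
  rw [Prod.ext_iff]
  exact ⟨hlev j, this⟩

end Aux3

section Aux4

lemma sd_left_inj {a x y : Finset (List ℕ)} (h : a ∆ x = a ∆ y) : x = y := by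
  rw [← sd_cancel_left a x, h, sd_cancel_left]

lemma snoc_mem_Gset {T : Set (List ℕ)} {k : ℕ} {a : Fin k → GP} {e : GP}
    (haG : ∀ j, a j ∈ Gset T) (he : e ∈ Gset T) :
    ∀ j, (Fin.snoc a e : Fin (k + 1) → GP) j ∈ Gset T := by
  intro j
  refine Fin.lastCases ?_ ?_ j
  · rw [Fin.snoc_last]; exact he
  · intro j'; rw [Fin.snoc_castSucc]; exact haG j'

lemma snoc_max {k n m : ℕ} {a : Fin k → GP} {e : GP}
    (hmax : ∀ j, (a j).1 ≤ n) (hnm : n ≤ m) (he : e.1 ≤ m) :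
    ∀ j, ((Fin.snoc a e : Fin (k + 1) → GP) j).1 ≤ m := by
  intro j
  refine Fin.lastCases ?_ ?_ j
  · rw [Fin.snoc_last]; exact he
  · intro j'; rw [Fin.snoc_castSucc]; exact le_trans (hmax j') hnm

lemma rel_snoc {n k : ℕ} {a b : Fin k → GP} {c : Finset (List ℕ)} {e d : GP}
    (hrel : RelT n a b c) (hd : d = (e.1, e.2 ∆ pmap^[n - e.1] c)) :
    RelT n (Fin.snoc a e) (Fin.snoc b d) c := by
  intro j
  refine Fin.lastCases ?_ ?_ j
  · rw [Fin.snoc_last, Fin.snoc_last]; exact hd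
  · intro j'; rw [Fin.snoc_castSucc, Fin.snoc_castSucc]; exact hrel j'

lemma BF_iff {T : Set (List ℕ)} (hT : IsTree T) (β : Ordinal) :
    ∀ (k n : ℕ) (a b : Fin k → GP), (∀ j, a j ∈ Gset T) → (∀ j, b j ∈ Gset T) →
    ∀ i : Fin k, (a i).1 = n → (∀ j, (a j).1 ≤ n) →
    (BF T β k a b ↔ ∃ c, c ∈ Vset T n ∧ Ebf T β n c ∧ RelT n a b c) := by
  induction β using Ordinal.induction with
  | _ β IH =>
  intro k n a b haG hbG i hi hmax
  rcases eq_or_ne β 0 with rfl | hβ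
  · rw [BF]; simp only [if_pos rfl]
    constructor
    · intro h
      obtain ⟨c, hcV, hrel⟩ := rel_of_eqQF hT haG hbG i hi hmax h
      exact ⟨c, hcV, Ebf_zero T n c, hrel⟩
    · rintro ⟨c, hcV, -, hrel⟩
      exact eqQF_of_rel hmax hrel
  · rw [BF]; simp only [if_neg hβ]
    constructor
    · intro h
      have h0 : eqQF T k a b := by
        obtain ⟨d, hd, hbf⟩ := (h 0 (pos_iff_ne_zero.mpr hβ)).1 (0, ∅) (id_mem_Gset T 0)
        rw [BF] at hbf
        simp only [if_pos rfl] at hbf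
        exact eqQF_restrict hbf
      obtain ⟨c, hcV, hrel⟩ := rel_of_eqQF hT haG hbG i hi hmax h0
      refine ⟨c, hcV, ?_, hrel⟩
      rw [Ebf]
      intro γ hγ m hm
      obtain ⟨d, hdG, hbf⟩ := (h γ hγ).1 (m, ∅) (id_mem_Gset T m)
      have hlast : ((Fin.snoc a ((m, ∅) : GP) : Fin (k+1) → GP) (Fin.last k)).1 = m := by
        rw [Fin.snoc_last]
      have := (IH γ hγ (k+1) m (Fin.snoc a (m, ∅)) (Fin.snoc b d)
        (snoc_mem_Gset haG (id_mem_Gset T m)) (snoc_mem_Gset hbG hdG)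
        (Fin.last k) hlast (snoc_max hmax (le_of_lt hm) le_rfl)).mp hbf
      obtain ⟨c', hc'V, hE', hrel'⟩ := this
      refine ⟨c', hc'V, ?_, hE'⟩
      have h1 := hrel' (Fin.castSucc i)
      rw [Fin.snoc_castSucc, Fin.snoc_castSucc] at h1
      have h2 := hrel i
      rw [hi] at h1 h2
      rw [Nat.sub_self] at h2
      rw [h2] at h1
      have := (Prod.ext_iff.mp h1).2
      exact (sd_left_inj this.symm)
    · rintro ⟨c, hcV, hE, hrel⟩
      intro γ hγ
      have hcV' : ∀ l : ℕ, l ≤ n → pmap^[n - l] c ∈ Vset T l := by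
        intro l hl
        apply Vset_pmap_iter hT
        have e : l + (n - l) = n := by omega
        rw [e]; exact hcV
      constructor
      · intro e heG
        rcases le_or_gt e.1 n with hle | hlt
        · refine ⟨(e.1, e.2 ∆ pmap^[n - e.1] c), Vset_symmDiff heG (hcV' e.1 hle), ?_⟩
          refine (IH γ hγ (k+1) n (Fin.snoc a e) (Fin.snoc b _)
            (snoc_mem_Gset haG heG) (snoc_mem_Gset hbG (Vset_symmDiff heG (hcV' e.1 hle)))
            (Fin.castSucc i) (by rw [Fin.snoc_castSucc]; exact hi)
            (snoc_max hmax le_rfl hle)).mpr ?_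
          exact ⟨c, hcV, Ebf_mono hE hγ.le, rel_snoc hrel rfl⟩
        · rw [Ebf] at hE
          obtain ⟨c', hc'V, hc'p, hE'⟩ := hE γ hγ e.1 hlt
          refine ⟨(e.1, e.2 ∆ c'), Vset_symmDiff heG hc'V, ?_⟩
          refine (IH γ hγ (k+1) e.1 (Fin.snoc a e) (Fin.snoc b _)
            (snoc_mem_Gset haG heG) (snoc_mem_Gset hbG (Vset_symmDiff heG hc'V))
            (Fin.last k) (by rw [Fin.snoc_last]) (snoc_max hmax (le_of_lt hlt) le_rfl)).mpr ?_
          refine ⟨c', hc'V, hE', ?_⟩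
          intro j
          refine Fin.lastCases ?_ ?_ j
          · rw [Fin.snoc_last, Fin.snoc_last, Nat.sub_self]
            rfl
          · intro j'
            rw [Fin.snoc_castSucc, Fin.snoc_castSucc, hrel j']
            have harith : e.1 - (a j').1 = (n - (a j').1) + (e.1 - n) := by
              have := hmax j'; omega
            rw [harith, pmap_iter_add, hc'p]
      · intro d hdG
        rcases le_or_gt d.1 n with hle | hlt
        · refine ⟨(d.1, d.2 ∆ pmap^[n - d.1] c), Vset_symmDiff hdG (hcV' d.1 hle), ?_⟩
          refine (IH γ hγ (k+1) n (Fin.snoc a ((d.1, d.2 ∆ pmap^[n - d.1] c) : GP)) (Fin.snoc b d)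
            (snoc_mem_Gset haG (mem_Gset_iff.mpr (Vset_symmDiff hdG (hcV' d.1 hle)))) (snoc_mem_Gset hbG hdG)
            (Fin.castSucc i) (by rw [Fin.snoc_castSucc]; exact hi)
            (snoc_max hmax le_rfl hle)).mpr ?_
          refine ⟨c, hcV, Ebf_mono hE hγ.le, rel_snoc hrel ?_⟩
          rw [Prod.ext_iff]
          exact ⟨rfl, (sd_cancel_right d.2 _).symm⟩
        · rw [Ebf] at hE
          obtain ⟨c', hc'V, hc'p, hE'⟩ := hE γ hγ d.1 hlt
          refine ⟨(d.1, d.2 ∆ c'), Vset_symmDiff hdG hc'V, ?_⟩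
          refine (IH γ hγ (k+1) d.1 (Fin.snoc a ((d.1, d.2 ∆ c') : GP)) (Fin.snoc b d)
            (snoc_mem_Gset haG (mem_Gset_iff.mpr (Vset_symmDiff hdG hc'V))) (snoc_mem_Gset hbG hdG)
            (Fin.last k) (by rw [Fin.snoc_last]) (snoc_max hmax (le_of_lt hlt) le_rfl)).mpr ?_
          refine ⟨c', hc'V, hE', ?_⟩
          intro j
          refine Fin.lastCases ?_ ?_ j
          · rw [Fin.snoc_last, Fin.snoc_last, Nat.sub_self]
            rw [Prod.ext_iff]
            exact ⟨rfl, (sd_cancel_right d.2 _).symm⟩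
          · intro j'
            rw [Fin.snoc_castSucc, Fin.snoc_castSucc, hrel j']
            have harith : d.1 - (a j').1 = (n - (a j').1) + (d.1 - n) := by
              have := hmax j'; omega
            rw [harith, pmap_iter_add, hc'p]

end Aux4

section Aux5

/-- A fully coherent translation gives an automorphism carrying `ā` to its translate. -/
lemma InOrbit_of_rel {T : Set (List ℕ)} {k n : ℕ} {a b : Fin k → GP}
    (hmax : ∀ j, (a j).1 ≤ n) {c : Finset (List ℕ)}
    (hE : Einf T n c) (hrel : RelT n a b c) : InOrbit T a b := by
  obtain ⟨f, hfn, hf⟩ := hE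
  have hcoh : ∀ m, pmap (f (m + 1)) = f m := fun m => (hf m).2
  have hV : ∀ m, f m ∈ Vset T m := fun m => (hf m).1
  have hiter : ∀ m j, pmap^[j] (f (m + j)) = f m := coh_iter hcoh
  set g : GP → GP := fun x => (x.1, x.2 ∆ f x.1) with hg
  have hgG : ∀ x ∈ Gset T, g x ∈ Gset T := by
    intro x hx
    exact mem_Gset_iff.mpr (Vset_symmDiff hx (hV x.1))
  have hinv : ∀ x, g (g x) = x := by
    intro x
    simp only [hg, sd_cancel_right]
  refine ⟨g, ⟨⟨hgG, ?_, ?_⟩, ?_⟩, ?_⟩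
  · -- InjOn
    intro x _ y _ hxy
    rw [← hinv x, ← hinv y, hxy]
  · -- SurjOn
    intro x hx
    exact ⟨g x, hgG x hx, hinv x⟩
  · -- commutation
    intro u _ y _
    have hmin : (g y).1 = y.1 := rfl
    rcases le_or_gt u.1 y.1 with hle | hlt
    · rw [fA_le hle, fA_le (show u.1 ≤ (g y).1 from hle)]
      simp only [hg]
      congr 1
      rw [pmap_iter_symmDiff, ← symmDiff_assoc]
      congr 1
      rw [coh_proj hcoh hle]
    · have hmin1 : min u.1 y.1 = y.1 := min_eq_right (le_of_lt hlt)
      have hmin2 : min u.1 (g y).1 = (g y).1 := min_eq_right (show (g y).1 ≤ u.1 from le_of_lt hlt)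
      rw [fA_eq, fA_eq]
      simp only [hmin1, hmin2, hmin]
      simp only [hg, Nat.sub_self, Function.iterate_zero_apply]
      rw [Prod.ext_iff]
      refine ⟨rfl, ?_⟩
      simp only [← symmDiff_assoc]
  · intro j
    rw [hrel j]
    simp only [hg]
    rw [Prod.ext_iff]
    refine ⟨rfl, ?_⟩
    congr 2
    rw [← hfn, coh_proj hcoh (hmax j)]

/-- An automorphism carrying `ā` to `b̄` yields a fully coherent translation. -/
lemma rel_of_InOrbit {T : Set (List ℕ)} (hT : IsTree T) {k n : ℕ} {a b : Fin k → GP}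
    (haG : ∀ j, a j ∈ Gset T) (hmax : ∀ j, (a j).1 ≤ n)
    (horb : InOrbit T a b) :
    ∃ c ∈ Vset T n, Einf T n c ∧ RelT n a b c := by
  obtain ⟨g, ⟨⟨hmaps, hinj, hsurj⟩, hcomm⟩, hab⟩ := horb
  -- level non-increase
  have hle : ∀ x ∈ Gset T, (g x).1 ≤ x.1 := by
    intro x hx
    have h := hcomm (x.1, ∅) (id_mem_Gset T x.1) x hx
    rw [fA_id_left le_rfl] at h
    have : (fA (x.1, ∅) (g x)).1 = min x.1 (g x).1 := rfl
    rw [← h] at this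
    have := min_le_left x.1 (g x).1
    omega
  -- level preservation
  have heq : ∀ x ∈ Gset T, (g x).1 = x.1 := by
    intro x hx
    by_contra hne
    have hlt : (g x).1 < x.1 := lt_of_le_of_ne (hle x hx) hne
    set x' : GP := ((g x).1, pmap^[x.1 - (g x).1] x.2) with hx'
    have hx'G : x' ∈ Gset T := by
      refine mem_Gset_iff.mpr (Vset_pmap_iter hT ?_)
      have e : (g x).1 + (x.1 - (g x).1) = x.1 := by omega
      rw [e]
      exact hx
    have hfa : fA ((g x).1, ∅) x = x' := by
      rw [fA_le (show (((g x).1, ∅) : GP).1 ≤ x.1 from le_of_lt hlt)]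
      simp only [pmap_iter_empty, empty_sd]
      rfl
    have h1 : g x' = g x := by
      rw [← hfa, hcomm ((g x).1, ∅) (id_mem_Gset T _) x hx, fA_id_left le_rfl]
    have := hinj hx'G hx h1
    exact hne (by simpa [hx'] using congrArg Prod.fst this)
  -- the coherent family
  set f : ℕ → Finset (List ℕ) := fun m => (g (m, ∅)).2 with hf
  have hgid : ∀ m, g (m, ∅) = (m, f m) := by
    intro m
    rw [Prod.ext_iff]
    exact ⟨heq (m, ∅) (id_mem_Gset T m), rfl⟩
  have hfV : ∀ m, f m ∈ Vset T m := by
    intro m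
    have := hmaps (id_mem_Gset T m)
    rw [mem_Gset_iff, hgid m] at this
    exact this
  have hcoh : ∀ m, pmap (f (m + 1)) = f m := by
    intro m
    have h := hcomm (m, ∅) (id_mem_Gset T m) (m + 1, ∅) (id_mem_Gset T (m + 1))
    have h1 : fA ((m, ∅) : GP) ((m + 1, ∅) : GP) = (m, ∅) := by
      rw [fA_le (by omega : ((m, ∅) : GP).1 ≤ ((m + 1, ∅) : GP).1)]
      simp only [pmap_iter_empty, sd_empty]
    rw [h1, hgid m, hgid (m + 1)] at h
    rw [fA_le (by omega : ((m, ∅) : GP).1 ≤ ((m + 1, f (m + 1)) : GP).1)] at h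
    have := (Prod.ext_iff.mp h).2
    simp only [Nat.add_sub_cancel_left] at this
    rw [this]
    simp only [empty_sd, Function.iterate_one]
  have hiter : ∀ m j, pmap^[j] (f (m + j)) = f m := coh_iter hcoh
  refine ⟨f n, hfV n, ⟨f, rfl, fun m => ⟨hfV m, hcoh m⟩⟩, ?_⟩
  intro j
  have h := hcomm (a j) (haG j) ((a j).1, ∅) (id_mem_Gset T (a j).1)
  have h1 : fA (a j) (((a j).1, ∅) : GP) = a j := by
    rw [fA_le (show (a j).1 ≤ (((a j).1, ∅) : GP).1 from le_rfl)]
    simp only [Nat.sub_self, Function.iterate_zero_apply, sd_empty]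
  rw [h1, hab j, hgid (a j).1] at h
  rw [fA_le (show (a j).1 ≤ (((a j).1, f (a j).1) : GP).1 from le_rfl)] at h
  simp only [Nat.sub_self, Function.iterate_zero_apply] at h
  rw [h, coh_proj hcoh (hmax j)]

end Aux5

section Aux6

lemma SR_set_eq {T : Set (List ℕ)} (hT : IsTree T) {k n : ℕ} {a : Fin k → GP}
    (haG : ∀ j, a j ∈ Gset T) (i : Fin k) (hi : (a i).1 = n) (hmax : ∀ j, (a j).1 ≤ n) :
    {β : Ordinal | ∀ b : Fin k → GP, (∀ j, b j ∈ Gset T) → BF T β k a b → InOrbit T a b}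
      = {β : Ordinal | ∀ c ∈ Vset T n, Ebf T β n c → Einf T n c} := by
  ext β
  simp only [Set.mem_setOf_eq]
  constructor
  · intro h c hcV hE
    set b : Fin k → GP := fun j => ((a j).1, (a j).2 ∆ pmap^[n - (a j).1] c) with hb
    have hbG : ∀ j, b j ∈ Gset T := by
      intro j
      refine mem_Gset_iff.mpr (Vset_symmDiff (haG j) (Vset_pmap_iter hT ?_))
      have e : (a j).1 + (n - (a j).1) = n := by have := hmax j; omega
      rw [e]; exact hcV
    have hrel : RelT n a b c := fun j => rfl
    have hbf := (BF_iff hT β k n a b haG hbG i hi hmax).mpr ⟨c, hcV, hE, hrel⟩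
    obtain ⟨c', hc'V, hEinf, hrel'⟩ := rel_of_InOrbit hT haG hmax (h b hbG hbf)
    have hcc : c = c' := by
      have h1 := hrel i
      have h2 := hrel' i
      rw [h1] at h2
      have h3 := (Prod.ext_iff.mp h2).2
      have e0 : n - (a i).1 = 0 := by rw [hi]; omega
      rw [e0] at h3
      exact sd_left_inj h3
    rwa [hcc]
  · intro h b hbG hbf
    obtain ⟨c, hcV, hE, hrel⟩ := (BF_iff hT β k n a b haG hbG i hi hmax).mp hbf
    exact InOrbit_of_rel hmax (h c hcV hE) hrel

end Aux6

theorem stmt_14 (T : Set (List ℕ)) (hT : IsTree T) (k : ℕ) (a : Fin k → GP)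
    (haG : ∀ i, a i ∈ Gset T) (n : ℕ) (i : Fin k) (hi : (a i).1 = n)
    (hmax : ∀ j, (a j).1 ≤ n) :
    SR T a = SR T ![((n, ∅) : GP)] := by
  have h1 := SR_set_eq hT haG i hi hmax
  have haG' : ∀ j : Fin 1, (![((n, ∅) : GP)]) j ∈ Gset T := by
    intro j
    have : j = 0 := Subsingleton.elim j 0
    rw [this]
    exact id_mem_Gset T n
  have hi' : ((![((n, ∅) : GP)]) 0).1 = n := rfl
  have hmax' : ∀ j : Fin 1, ((![((n, ∅) : GP)]) j).1 ≤ n := by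
    intro j
    have : j = 0 := Subsingleton.elim j 0
    rw [this]
    exact le_of_eq hi'
  have h2 := SR_set_eq hT haG' 0 hi' hmax'
  rw [SR, SR, h1, h2]
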